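/- Let G be block-decomposable with every node of degree at most 3, and suppose some block decomposition of G contains a diamond block whose mid-edge is not annihilated. Then neither outlet of that diamond is identified with any other outlet, and the four nodes of the diamond form an entire connected component of G (isomorphic to the diamond block). -/

import Mathlib

/-- The six block shapes: spike, triangle, infork, outfork, diamond, square. -/
inductive BlockShape : Type
  | spike | triangle | infork | outfork | diamond | square
  deriving DecidableEq

namespace BlockShape

/-- Number of nodes of each block shape. -/
def numNodes : BlockShape → ℕ
  | spike => 2
  | triangle => 3
  | infork => 3
  | outfork => 3
  | diamond => 4
  | square => 5

/-- The directed edges of each block shape.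
For the spike the nodes are `x = 0, y = 1` with edge `x → y`.
For the triangle the nodes are `0, 1, 2` with edges `0 → 1 → 2 → 0`.
For the infork the nodes are `x = 0, y = 1, c = 2` with edges `x → c`, `y → c`.
For the outfork the nodes are `x = 0, y = 1, c = 2` with edges `c → x`, `c → y`.
For the diamond the nodes are `p = 0, q = 1, x = 2, y = 3` with boundary edges
`p → x, x → q, q → y, y → p` and mid-edge `q → p`.
For the square the nodes are the center `c = 0` and corners `v1 = 1, …, v4 = 4`, with
edges `v1 → v2 → v3 → v4 → v1`, `c → v1`, `v2 → c`, `c → v3`, `v4 → c`. -/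
def edges : (s : BlockShape) → List (Fin s.numNodes × Fin s.numNodes)
  | spike => ([(0, 1)] : List (Fin 2 × Fin 2))
  | triangle => ([(0, 1), (1, 2), (2, 0)] : List (Fin 3 × Fin 3))
  | infork => ([(0, 2), (1, 2)] : List (Fin 3 × Fin 3))
  | outfork => ([(2, 0), (2, 1)] : List (Fin 3 × Fin 3))
  | diamond => ([(0, 2), (2, 1), (1, 3), (3, 0), (1, 0)] : List (Fin 4 × Fin 4))
  | square => ([(1, 2), (2, 3), (3, 4), (4, 1), (0, 1), (2, 0), (0, 3), (4, 0)] :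
      List (Fin 5 × Fin 5))

/-- The outlets (white nodes) of each block shape. -/
def IsOutlet : (s : BlockShape) → Fin s.numNodes → Prop
  | spike, _ => True
  | triangle, _ => True
  | infork, i => (i : ℕ) = 2
  | outfork, i => (i : ℕ) = 2
  | diamond, i => (i : ℕ) = 0 ∨ (i : ℕ) = 1
  | square, i => (i : ℕ) = 0

/-- The degree of a node inside its block (number of incident edges). -/
def blockDeg (s : BlockShape) (i : Fin s.numNodes) : ℕ :=
  s.edges.countP fun e => decide (e.1 = i) || decide (e.2 = i)

end BlockShape

/-- A directed multigraph on a vertex type `V` is given by its edge multiplicity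
function `G : V → V → ℕ`.  It is a directed graph in our sense if it has no loops
and no 2-cycles. -/
def IsDiGraph {V : Type} (G : V → V → ℕ) : Prop :=
  (∀ v, G v v = 0) ∧ ∀ x y, G x y = 0 ∨ G y x = 0

/-- Degree of a node: the number of incident edges counted with multiplicity. -/
def degree {V : Type} [Fintype V] (G : V → V → ℕ) (v : V) : ℕ :=
  ∑ w, (G v w + G w v)

/-- Two nodes are adjacent if some edge joins them (in either direction). -/
def Adj {V : Type} (G : V → V → ℕ) (x y : V) : Prop := 0 < G x y + G y x

/-- `Reach G x y` : `y` lies in the connected component of `x`. -/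
def Reach {V : Type} (G : V → V → ℕ) : V → V → Prop := Relation.ReflTransGen (Adj G)

/-- The connected component of a node, as a finset. -/
noncomputable def component {V : Type} [Fintype V] (G : V → V → ℕ) (v : V) : Finset V :=
  letI := Classical.decPred fun w => Reach G v w
  Finset.univ.filter (Reach G v)

/-- Total number of block edges mapped onto the ordered pair `(x, y)` by the gluing data. -/
def blockMult {V : Type} [DecidableEq V] (n : ℕ) (shape : Fin n → BlockShape)
    (emb : (b : Fin n) → Fin (shape b).numNodes → V) (x y : V) : ℕ :=
  ∑ b : Fin n, (shape b).edges.countP fun e => decide (emb b e.1 = x ∧ emb b e.2 = y)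

/-- A block decomposition of the directed multigraph `G` : a finite collection of blocks
together with an identification of their nodes with the nodes of `G` such that
* each block is embedded injectively,
* nodes of two distinct blocks may be identified only if both are outlets,
* each outlet is identified with at most one other outlet (no vertex lies in three blocks),
* every vertex of `G` comes from some block, and
* the multiplicity of each edge of `G` is the number of block edges giving it minus the
  number of block edges giving the reversed edge (two parallel edges with the same
  direction are kept as a double edge; two parallel edges with opposite directions
  annihilate each other). -/
structure BlockDecomposition {V : Type} [Fintype V] [DecidableEq V] (G : V → V → ℕ) :
    Type where
  n : ℕ
  shape : Fin n → BlockShape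
  emb : (b : Fin n) → Fin (shape b).numNodes → V
  emb_inj : ∀ b, Function.Injective (emb b)
  glue_outlets : ∀ (b c : Fin n) (i : Fin (shape b).numNodes) (j : Fin (shape c).numNodes),
    emb b i = emb c j → b ≠ c → (shape b).IsOutlet i ∧ (shape c).IsOutlet j
  atMostTwo : ∀ (b c d : Fin n) (i : Fin (shape b).numNodes) (j : Fin (shape c).numNodes)
    (k : Fin (shape d).numNodes), emb b i = emb c j → emb b i = emb d k →
    b = c ∨ b = d ∨ c = d
  covers : ∀ v : V, ∃ b i, emb b i = v
  edge_eq : ∀ x y : V, G x y = blockMult n shape emb x y - blockMult n shape emb y x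

/-- The number of block edges of a decomposition lying over the ordered pair `(x, y)`. -/
def BlockDecomposition.mult {V : Type} [Fintype V] [DecidableEq V] {G : V → V → ℕ}
    (D : BlockDecomposition G) : V → V → ℕ :=
  blockMult D.n D.shape D.emb

/-- A graph is (block-)decomposable if it admits a block decomposition. -/
def Decomposable {V : Type} [Fintype V] [DecidableEq V] (G : V → V → ℕ) : Prop :=
  Nonempty (BlockDecomposition G)

/-- The edge `e` of block `b` is annihilated in the decomposition `D` : some edge of
another block lies over the same pair of vertices with the opposite direction. -/
def BlockDecomposition.EdgeAnnihilated {V : Type} [Fintype V] [DecidableEq V]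
    {G : V → V → ℕ} (D : BlockDecomposition G) (b : Fin D.n)
    (e : Fin (D.shape b).numNodes × Fin (D.shape b).numNodes) : Prop :=
  e ∈ (D.shape b).edges ∧
    ∃ (c : Fin D.n) (f : Fin (D.shape c).numNodes × Fin (D.shape c).numNodes),
      c ≠ b ∧ f ∈ (D.shape c).edges ∧ D.emb c f.1 = D.emb b e.2 ∧ D.emb c f.2 = D.emb b e.1
namespace Aux
open BlockShape

lemma no_loop : ∀ (s : BlockShape) (e : Fin s.numNodes × Fin s.numNodes), e ∈ s.edges → e.1 ≠ e.2 := by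
  intro s; cases s <;> decide

lemma no_two_cycle : ∀ (s : BlockShape) (e : Fin s.numNodes × Fin s.numNodes), e ∈ s.edges → (e.2, e.1) ∉ s.edges := by
  intro s; cases s <;> decide

lemma exists_incident : ∀ (s : BlockShape) (i : Fin s.numNodes), ∃ e, e ∈ s.edges ∧ (e.1 = i ∨ e.2 = i) := by
  intro s; cases s <;> decide

lemma numNodes_eq {s : BlockShape} (h : s = .diamond) : s.numNodes = 4 := by subst h; rfl

lemma mem_edges_iff {s : BlockShape} (h : s = .diamond) (f : Fin s.numNodes × Fin s.numNodes) :
    f ∈ s.edges ↔ (Fin.cast (numNodes_eq h) f.1, Fin.cast (numNodes_eq h) f.2) ∈ BlockShape.diamond.edges := by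
  subst h; exact Iff.rfl

lemma countP_eq {s : BlockShape} (h : s = .diamond) (p : Fin s.numNodes × Fin s.numNodes → Bool) :
    s.edges.countP p = BlockShape.diamond.edges.countP
      (fun e => p (Fin.cast (numNodes_eq h).symm e.1, Fin.cast (numNodes_eq h).symm e.2)) := by
  subst h; rfl

lemma isOutlet_iff {s : BlockShape} (h : s = .diamond) (i : Fin s.numNodes) :
    s.IsOutlet i ↔ ((i : ℕ) = 0 ∨ (i : ℕ) = 1) := by
  subst h; exact Iff.rfl

end Aux
namespace Aux

lemma four_le_sum4 {α : Type} [Fintype α] [DecidableEq α] (t : α → ℕ) (a b c d : α)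
    (hab : a ≠ b) (hac : a ≠ c) (had : a ≠ d) (hbc : b ≠ c) (hbd : b ≠ d) (hcd : c ≠ d)
    (ha : 1 ≤ t a) (hb : 1 ≤ t b) (hc : 1 ≤ t c) (hd : 1 ≤ t d) : 4 ≤ ∑ x, t x := by
  have hsub : ({a, b, c, d} : Finset α).sum t ≤ ∑ x, t x :=
    Finset.sum_le_sum_of_subset (Finset.subset_univ _)
  rw [Finset.sum_insert (by simp [hab, hac, had]),
    Finset.sum_insert (by simp [hbc, hbd]), Finset.sum_pair hcd] at hsub
  omega

lemma four_le_sum3 {α : Type} [Fintype α] [DecidableEq α] (t : α → ℕ) (a b c : α)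
    (hab : a ≠ b) (hac : a ≠ c) (hbc : b ≠ c)
    (ha : 2 ≤ t a) (hb : 1 ≤ t b) (hc : 1 ≤ t c) : 4 ≤ ∑ x, t x := by
  have hsub : ({a, b, c} : Finset α).sum t ≤ ∑ x, t x :=
    Finset.sum_le_sum_of_subset (Finset.subset_univ _)
  rw [Finset.sum_insert (by simp [hab, hac]), Finset.sum_pair hbc] at hsub
  omega

lemma dec_mem (e : Fin 4 × Fin 4) (h : decide (e ∈ ([(0, 2), (2, 1), (1, 3), (3, 0), (1, 0)] : List (Fin 4 × Fin 4))) = true) :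
    e ∈ BlockShape.diamond.edges := by show e ∈ ([(0, 2), (2, 1), (1, 3), (3, 0), (1, 0)] : List (Fin 4 × Fin 4)); exact of_decide_eq_true h

lemma dec_nmem (e : Fin 4 × Fin 4) (h : decide (e ∈ ([(0, 2), (2, 1), (1, 3), (3, 0), (1, 0)] : List (Fin 4 × Fin 4))) = false) :
    e ∉ BlockShape.diamond.edges := by show e ∉ ([(0, 2), (2, 1), (1, 3), (3, 0), (1, 0)] : List (Fin 4 × Fin 4)); exact of_decide_eq_false h

end Aux
/-- if every node of a block-decomposable graph has degree at most 3 and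
some block decomposition contains a diamond block whose mid-edge is not annihilated,
then no node of that diamond is identified with a node of another block, and the four
nodes of the diamond form an entire connected component of `G`, isomorphic to the
diamond block. -/
theorem stmt_17 {V : Type} [Fintype V] [DecidableEq V] (G : V → V → ℕ)
    (hG : IsDiGraph G) (hdeg : ∀ v, degree G v ≤ 3)
    (D : BlockDecomposition G) (b : Fin D.n)
    (hb : D.shape b = BlockShape.diamond)
    (hmid : ∀ e : Fin (D.shape b).numNodes × Fin (D.shape b).numNodes,
      (e.1 : ℕ) = 1 → (e.2 : ℕ) = 0 → ¬ D.EdgeAnnihilated b e) :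
    (∀ i : Fin (D.shape b).numNodes, (D.shape b).IsOutlet i →
      ∀ (c : Fin D.n) (k : Fin (D.shape c).numNodes), D.emb c k = D.emb b i → c = b) ∧
    (∀ i j : Fin (D.shape b).numNodes, Reach G (D.emb b i) (D.emb b j)) ∧
    (∀ (i : Fin (D.shape b).numNodes) (x : V),
      Reach G (D.emb b i) x → ∃ j, D.emb b j = x) ∧
    (∀ i j : Fin (D.shape b).numNodes,
      G (D.emb b i) (D.emb b j) = (D.shape b).edges.countP fun e => decide (e = (i, j))) := by
  classical
  have h4 := Aux.numNodes_eq hb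
  set κ : Fin 4 → Fin (D.shape b).numNodes := Fin.cast h4.symm with hκ
  have κinj : Function.Injective κ := fun a₁ a₂ h => by
    simpa [hκ, Fin.ext_iff] using congrArg Fin.val h
  have κval : ∀ a : Fin 4, ((κ a : Fin (D.shape b).numNodes) : ℕ) = (a : ℕ) := by
    rw [hκ]; intro a; exact Fin.coe_cast _ a
  set v : Fin 4 → V := fun i => D.emb b (κ i) with hv
  have vinj : Function.Injective v := fun a₁ a₂ h => κinj (D.emb_inj b h)
  have vi : ∀ i : Fin (D.shape b).numNodes, D.emb b i = v (Fin.cast h4 i) := by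
    intro i
    exact congrArg (D.emb b) (by ext; simp [hκ] : i = κ (Fin.cast h4 i))
  set M : V → V → ℕ := blockMult D.n D.shape D.emb with hM
  have hGM : ∀ x y, G x y = M x y - M y x := D.edge_eq
  have hMsum : ∀ x y, M x y = ∑ d : Fin D.n,
      (D.shape d).edges.countP fun e => decide (D.emb d e.1 = x ∧ D.emb d e.2 = y) :=
    fun _ _ => rfl
  -- translation of block b's edges
  have bedge : ∀ f, f ∈ (D.shape b).edges →
      ∃ e : Fin 4 × Fin 4, e ∈ BlockShape.diamond.edges ∧ f.1 = κ e.1 ∧ f.2 = κ e.2 := by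
    intro f hf
    exact ⟨(Fin.cast h4 f.1, Fin.cast h4 f.2), (Aux.mem_edges_iff hb f).mp hf,
      by ext; simp [hκ], by ext; simp [hκ]⟩
  -- block b's contribution to multiplicities
  have cntb : ∀ i' j' : Fin 4,
      ((D.shape b).edges.countP fun e => decide (D.emb b e.1 = v i' ∧ D.emb b e.2 = v j'))
        = BlockShape.diamond.edges.countP (fun e => decide (e = (i', j'))) := by
    intro i' j'
    rw [Aux.countP_eq hb]
    refine List.countP_congr fun e _ => ?_
    have hiff : (D.emb b (κ e.1) = v i' ∧ D.emb b (κ e.2) = v j') ↔ (e = (i', j')) := by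
      constructor
      · rintro ⟨h1, h2⟩
        exact Prod.ext (κinj (D.emb_inj b h1)) (κinj (D.emb_inj b h2))
      · rintro rfl
        exact ⟨rfl, rfl⟩
    simp only [decide_eq_true_eq]
    exact hiff
  -- dead ends are not shared
  have deadend : ∀ (c : Fin D.n) (k : Fin (D.shape c).numNodes), c ≠ b →
      D.emb c k ≠ v 2 ∧ D.emb c k ≠ v 3 := by
    intro c k hcb
    constructor
    · intro h
      have h1 := (D.glue_outlets b c (κ 2) k h.symm (Ne.symm hcb)).1
      rw [Aux.isOutlet_iff hb] at h1
      have h2 := κval 2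
      norm_num at h2
      omega
    · intro h
      have h1 := (D.glue_outlets b c (κ 3) k h.symm (Ne.symm hcb)).1
      rw [Aux.isOutlet_iff hb] at h1
      have h2 := κval 3
      norm_num at h2
      omega
  -- the mid-edge protection
  have midfree : ∀ (c : Fin D.n), c ≠ b → ∀ f, f ∈ (D.shape c).edges →
      ¬(D.emb c f.1 = v 0 ∧ D.emb c f.2 = v 1) := by
    intro c hcb f hf ⟨h1, h2⟩
    have hmem : (κ 1, κ 0) ∈ (D.shape b).edges := by
      rw [Aux.mem_edges_iff hb]
      have e1 : Fin.cast h4 (κ 1) = (1 : Fin 4) := by ext; simp [hκ]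
      have e2 : Fin.cast h4 (κ 0) = (0 : Fin 4) := by ext; simp [hκ]
      rw [e1, e2]; exact Aux.dec_mem _ rfl
    exact hmid (κ 1, κ 0) (by simp [hκ]) (by simp [hκ])
      ⟨hmem, c, f, hcb, hf, by simpa [hv] using h1, by simpa [hv] using h2⟩
  -- positivity/zero lemmas for M
  have Mwit : ∀ x y, 0 < M x y → ∃ d f, f ∈ (D.shape d).edges ∧
      D.emb d f.1 = x ∧ D.emb d f.2 = y := by
    intro x y h
    by_contra hno
    push_neg at hno
    have : M x y = 0 := by
      rw [hMsum]
      apply Finset.sum_eq_zero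
      intro d _
      rw [List.countP_eq_zero]
      intro f hf
      simp only [decide_eq_true_eq, not_and]
      intro h1 h2
      exact hno d f hf h1 h2
    omega
  have Mge1 : ∀ (d : Fin D.n) (f : Fin (D.shape d).numNodes × Fin (D.shape d).numNodes)
      (x y : V), f ∈ (D.shape d).edges → D.emb d f.1 = x → D.emb d f.2 = y →
      1 ≤ M x y := by
    intro d f x y hf h1 h2
    rw [hMsum]
    calc 1 ≤ (D.shape d).edges.countP fun e => decide (D.emb d e.1 = x ∧ D.emb d e.2 = y) := by
          rw [Nat.one_le_iff_ne_zero, Ne, List.countP_eq_zero]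
          push_neg
          exact ⟨f, hf, by simp [h1, h2]⟩
      _ ≤ _ := Finset.single_le_sum
          (f := fun c => (D.shape c).edges.countP fun e =>
            decide (D.emb c e.1 = x ∧ D.emb c e.2 = y))
          (fun _ _ => Nat.zero_le _) (Finset.mem_univ d)
  have Mge2 : ∀ (d d' : Fin D.n) (f : Fin (D.shape d).numNodes × Fin (D.shape d).numNodes)
      (g : Fin (D.shape d').numNodes × Fin (D.shape d').numNodes) (x y : V), d ≠ d' →
      f ∈ (D.shape d).edges → D.emb d f.1 = x → D.emb d f.2 = y →
      g ∈ (D.shape d').edges → D.emb d' g.1 = x → D.emb d' g.2 = y →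
      2 ≤ M x y := by
    intro d d' f g x y hdd hf hf1 hf2 hg hg1 hg2
    rw [hMsum]
    have hsub : ({d, d'} : Finset (Fin D.n)).sum
        (fun c => (D.shape c).edges.countP fun e => decide (D.emb c e.1 = x ∧ D.emb c e.2 = y))
        ≤ ∑ c, (D.shape c).edges.countP fun e => decide (D.emb c e.1 = x ∧ D.emb c e.2 = y) :=
      Finset.sum_le_sum_of_subset (Finset.subset_univ _)
    rw [Finset.sum_pair hdd] at hsub
    have c1 : 1 ≤ (D.shape d).edges.countP fun e => decide (D.emb d e.1 = x ∧ D.emb d e.2 = y) := by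
      rw [Nat.one_le_iff_ne_zero, Ne, List.countP_eq_zero]; push_neg
      exact ⟨f, hf, by simp [hf1, hf2]⟩
    have c2 : 1 ≤ (D.shape d').edges.countP fun e => decide (D.emb d' e.1 = x ∧ D.emb d' e.2 = y) := by
      rw [Nat.one_le_iff_ne_zero, Ne, List.countP_eq_zero]; push_neg
      exact ⟨g, hg, by simp [hg1, hg2]⟩
    omega
  -- membership of transported edges
  have κcast : ∀ a : Fin 4, Fin.cast h4 (κ a) = a := fun a => Fin.ext (κval a)
  have bmem : ∀ e : Fin 4 × Fin 4, e ∈ BlockShape.diamond.edges →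
      ((κ e.1, κ e.2) : Fin (D.shape b).numNodes × Fin (D.shape b).numNodes)
        ∈ (D.shape b).edges := by
    intro e he
    rw [Aux.mem_edges_iff hb]
    show (Fin.cast h4 (κ e.1), Fin.cast h4 (κ e.2)) ∈ _
    rw [κcast, κcast]
    exact he
  have vne : ∀ a a' : Fin 4, a ≠ a' → v a ≠ v a' := fun _ _ h he => h (vinj he)
  -- the master classification of block edges between diamond vertices
  have master : ∀ (d : Fin D.n) (g : Fin (D.shape d).numNodes × Fin (D.shape d).numNodes)
      (a a' : Fin 4), g ∈ (D.shape d).edges → D.emb d g.1 = v a → D.emb d g.2 = v a' →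
      (d = b ∧ (a, a') ∈ BlockShape.diamond.edges) ∨
      (d ≠ b ∧ (a : ℕ) < 2 ∧ (a' : ℕ) < 2 ∧ ¬((a : ℕ) = 0 ∧ (a' : ℕ) = 1)) := by
    intro d g a a' hg h1 h2
    by_cases hdb : d = b
    · subst hdb
      left
      refine ⟨rfl, ?_⟩
      obtain ⟨e, he, he1, he2⟩ := bedge g hg
      have ea : e.1 = a := κinj (D.emb_inj d (by rw [← he1]; exact h1))
      have ea' : e.2 = a' := κinj (D.emb_inj d (by rw [← he2]; exact h2))
      rw [← ea, ← ea']
      exact he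
    · right
      refine ⟨hdb, ?_, ?_, ?_⟩
      · have n2 : (a : ℕ) ≠ 2 := fun hval => (deadend d g.1 hdb).1
          (by rw [h1]; exact congrArg v (Fin.ext hval))
        have n3 : (a : ℕ) ≠ 3 := fun hval => (deadend d g.1 hdb).2
          (by rw [h1]; exact congrArg v (Fin.ext hval))
        have := a.isLt
        omega
      · have n2 : (a' : ℕ) ≠ 2 := fun hval => (deadend d g.2 hdb).1
          (by rw [h2]; exact congrArg v (Fin.ext hval))
        have n3 : (a' : ℕ) ≠ 3 := fun hval => (deadend d g.2 hdb).2
          (by rw [h2]; exact congrArg v (Fin.ext hval))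
        have := a'.isLt
        omega
      · rintro ⟨ha, ha'⟩
        exact midfree d hdb g hg
          ⟨by rw [h1]; exact congrArg v (Fin.ext ha),
           by rw [h2]; exact congrArg v (Fin.ext ha')⟩
  -- no cancellation at outlet vertices
  have NC : ∀ i' : Fin 4, (i' : ℕ) < 2 → ∀ w : V, M (v i') w = 0 ∨ M w (v i') = 0 := by
    intro i' hi' w
    by_contra hcon
    push_neg at hcon
    obtain ⟨d, f, hf, hf1, hf2⟩ := Mwit _ _ (Nat.pos_of_ne_zero hcon.1)
    obtain ⟨d', g, hg, hg1, hg2⟩ := Mwit _ _ (Nat.pos_of_ne_zero hcon.2)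
    rcases D.atMostTwo b d d' (κ i') f.1 g.2 hf1.symm hg2.symm with h | h | h
    · subst h
      obtain ⟨e, he, he1, he2⟩ := bedge f hf
      have ei : e.1 = i' := κinj (D.emb_inj b (by rw [← he1]; exact hf1))
      have hw : w = v e.2 := by rw [← hf2, he2]
      subst ei
      rcases master d' g e.2 e.1 hg (by rw [hg1, hw]) hg2 with ⟨_, hmem⟩ | ⟨_, hlt, _, hne⟩
      · fin_cases he <;>
          first
            | exact absurd hi' (by decide)
            | exact absurd hmem (Aux.dec_nmem _ rfl)
      · fin_cases he <;>
          first
            | exact absurd hi' (by decide)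
            | exact absurd hlt (by decide)
            | exact hne (by decide)
    · subst h
      obtain ⟨e, he, he1, he2⟩ := bedge g hg
      have ei : e.2 = i' := κinj (D.emb_inj b (by rw [← he2]; exact hg2))
      have hw : w = v e.1 := by rw [← hg1, he1]
      subst ei
      rcases master d f e.2 e.1 hf hf1 (by rw [hf2, hw]) with ⟨_, hmem⟩ | ⟨_, _, hlt, hne⟩
      · fin_cases he <;>
          first
            | exact absurd hi' (by decide)
            | exact absurd hmem (Aux.dec_nmem _ rfl)
      · fin_cases he <;>
          first
            | exact absurd hi' (by decide)
            | exact absurd hlt (by decide)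
            | exact hne (by decide)
    · subst h
      have e1 : g.2 = f.1 := D.emb_inj d (by rw [hg2, hf1])
      have e2 : g.1 = f.2 := D.emb_inj d (by rw [hg1, hf2])
      have hmem : (f.2, f.1) ∈ (D.shape d).edges := by
        have : g = (f.2, f.1) := Prod.ext e2 e1
        rwa [this] at hg
      exact Aux.no_two_cycle (D.shape d) f hf hmem
  -- degree identity at outlet vertices
  have teq : ∀ i' : Fin 4, (i' : ℕ) < 2 → ∀ w,
      G (v i') w + G w (v i') = M (v i') w + M w (v i') := by
    intro i' hi' w
    rw [hGM, hGM]
    rcases NC i' hi' w with h | h <;> omega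
  -- no other block meets an outlet of the diamond
  have outlet_excl : ∀ (i' : Fin 4), (i' : ℕ) < 2 →
      ∀ (c : Fin D.n) (k : Fin (D.shape c).numNodes), D.emb c k = v i' → c = b := by
    intro i' hi' c k hk
    by_contra hcb
    obtain ⟨e0, he0, hor⟩ := Aux.exists_incident (D.shape c) k
    have hsum : ∑ w, (M (v i') w + M w (v i')) ≤ 3 := by
      have h1 : degree G (v i') ≤ 3 := hdeg (v i')
      have h2 : degree G (v i') = ∑ w, (M (v i') w + M w (v i')) :=
        Finset.sum_congr rfl fun w _ => teq i' hi' w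
      omega
    have hi2 : i' = 0 ∨ i' = 1 := by
      have : (i' : ℕ) = 0 ∨ (i' : ℕ) = 1 := by omega
      rcases this with h | h
      · exact Or.inl (Fin.ext h)
      · exact Or.inr (Fin.ext h)
    rcases hi2 with rfl | rfl
    · -- i' = 0
      have t1 : 1 ≤ M (v 0) (v 1) + M (v 1) (v 0) := by
        have := Mge1 b (κ 1, κ 0) (v 1) (v 0) (bmem (1, 0) (Aux.dec_mem _ rfl)) rfl rfl
        omega
      have t2 : 1 ≤ M (v 0) (v 2) + M (v 2) (v 0) := by
        have := Mge1 b (κ 0, κ 2) (v 0) (v 2) (bmem (0, 2) (Aux.dec_mem _ rfl)) rfl rfl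
        omega
      have t3 : 1 ≤ M (v 0) (v 3) + M (v 3) (v 0) := by
        have := Mge1 b (κ 3, κ 0) (v 3) (v 0) (bmem (3, 0) (Aux.dec_mem _ rfl)) rfl rfl
        omega
      rcases hor with hsrc | htgt
      · -- edge of c from v 0 to w'
        have hc1 : D.emb c e0.1 = v 0 := by rw [hsrc, hk]
        have hne2 : D.emb c e0.2 ≠ v 2 := (deadend c e0.2 hcb).1
        have hne3 : D.emb c e0.2 ≠ v 3 := (deadend c e0.2 hcb).2
        by_cases hne0 : D.emb c e0.2 = v 1
        · exact midfree c hcb e0 he0 ⟨hc1, hne0⟩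
        · have tw : 1 ≤ M (v 0) (D.emb c e0.2) + M (D.emb c e0.2) (v 0) := by
            have := Mge1 c e0 (v 0) (D.emb c e0.2) he0 hc1 rfl
            omega
          have hkey := Aux.four_le_sum4 (fun w => M (v 0) w + M w (v 0))
            (v 1) (v 2) (v 3) (D.emb c e0.2)
            (vne 1 2 (by decide)) (vne 1 3 (by decide)) (Ne.symm hne0)
            (vne 2 3 (by decide)) (Ne.symm hne2) (Ne.symm hne3) t1 t2 t3 tw
          have hkey' : 4 ≤ ∑ w, (M (v 0) w + M w (v 0)) := hkey
          omega
      · -- edge of c from w' to v 0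
        have hc2 : D.emb c e0.2 = v 0 := by rw [htgt, hk]
        have hne2 : D.emb c e0.1 ≠ v 2 := (deadend c e0.1 hcb).1
        have hne3 : D.emb c e0.1 ≠ v 3 := (deadend c e0.1 hcb).2
        by_cases hne0 : D.emb c e0.1 = v 1
        · have h2 : 2 ≤ M (v 1) (v 0) :=
            Mge2 b c (κ 1, κ 0) e0 (v 1) (v 0) (Ne.symm hcb)
              (bmem (1, 0) (Aux.dec_mem _ rfl)) rfl rfl he0 hne0 hc2
          have t1' : 2 ≤ M (v 0) (v 1) + M (v 1) (v 0) := by omega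
          have hkey := Aux.four_le_sum3 (fun w => M (v 0) w + M w (v 0))
            (v 1) (v 2) (v 3)
            (vne 1 2 (by decide)) (vne 1 3 (by decide)) (vne 2 3 (by decide))
            t1' t2 t3
          have hkey' : 4 ≤ ∑ w, (M (v 0) w + M w (v 0)) := hkey
          omega
        · have tw : 1 ≤ M (v 0) (D.emb c e0.1) + M (D.emb c e0.1) (v 0) := by
            have := Mge1 c e0 (D.emb c e0.1) (v 0) he0 rfl hc2
            omega
          have hkey := Aux.four_le_sum4 (fun w => M (v 0) w + M w (v 0))
            (v 1) (v 2) (v 3) (D.emb c e0.1)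
            (vne 1 2 (by decide)) (vne 1 3 (by decide)) (Ne.symm hne0)
            (vne 2 3 (by decide)) (Ne.symm hne2) (Ne.symm hne3) t1 t2 t3 tw
          have hkey' : 4 ≤ ∑ w, (M (v 0) w + M w (v 0)) := hkey
          omega
    · -- i' = 1
      have t0 : 1 ≤ M (v 1) (v 0) + M (v 0) (v 1) := by
        have := Mge1 b (κ 1, κ 0) (v 1) (v 0) (bmem (1, 0) (Aux.dec_mem _ rfl)) rfl rfl
        omega
      have t2 : 1 ≤ M (v 1) (v 2) + M (v 2) (v 1) := by
        have := Mge1 b (κ 2, κ 1) (v 2) (v 1) (bmem (2, 1) (Aux.dec_mem _ rfl)) rfl rfl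
        omega
      have t3 : 1 ≤ M (v 1) (v 3) + M (v 3) (v 1) := by
        have := Mge1 b (κ 1, κ 3) (v 1) (v 3) (bmem (1, 3) (Aux.dec_mem _ rfl)) rfl rfl
        omega
      rcases hor with hsrc | htgt
      · -- edge of c from v 1 to w'
        have hc1 : D.emb c e0.1 = v 1 := by rw [hsrc, hk]
        have hne2 : D.emb c e0.2 ≠ v 2 := (deadend c e0.2 hcb).1
        have hne3 : D.emb c e0.2 ≠ v 3 := (deadend c e0.2 hcb).2
        by_cases hne0 : D.emb c e0.2 = v 0
        · have h2 : 2 ≤ M (v 1) (v 0) :=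
            Mge2 b c (κ 1, κ 0) e0 (v 1) (v 0) (Ne.symm hcb)
              (bmem (1, 0) (Aux.dec_mem _ rfl)) rfl rfl he0 hc1 hne0
          have t0' : 2 ≤ M (v 1) (v 0) + M (v 0) (v 1) := by omega
          have hkey := Aux.four_le_sum3 (fun w => M (v 1) w + M w (v 1))
            (v 0) (v 2) (v 3)
            (vne 0 2 (by decide)) (vne 0 3 (by decide)) (vne 2 3 (by decide))
            t0' t2 t3
          have hkey' : 4 ≤ ∑ w, (M (v 1) w + M w (v 1)) := hkey
          omega
        · have tw : 1 ≤ M (v 1) (D.emb c e0.2) + M (D.emb c e0.2) (v 1) := by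
            have := Mge1 c e0 (v 1) (D.emb c e0.2) he0 hc1 rfl
            omega
          have hkey := Aux.four_le_sum4 (fun w => M (v 1) w + M w (v 1))
            (v 0) (v 2) (v 3) (D.emb c e0.2)
            (vne 0 2 (by decide)) (vne 0 3 (by decide)) (Ne.symm hne0)
            (vne 2 3 (by decide)) (Ne.symm hne2) (Ne.symm hne3) t0 t2 t3 tw
          have hkey' : 4 ≤ ∑ w, (M (v 1) w + M w (v 1)) := hkey
          omega
      · -- edge of c from w' to v 1
        have hc2 : D.emb c e0.2 = v 1 := by rw [htgt, hk]
        have hne2 : D.emb c e0.1 ≠ v 2 := (deadend c e0.1 hcb).1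
        have hne3 : D.emb c e0.1 ≠ v 3 := (deadend c e0.1 hcb).2
        by_cases hne0 : D.emb c e0.1 = v 0
        · exact midfree c hcb e0 he0 ⟨hne0, hc2⟩
        · have tw : 1 ≤ M (v 1) (D.emb c e0.1) + M (D.emb c e0.1) (v 1) := by
            have := Mge1 c e0 (D.emb c e0.1) (v 1) he0 rfl hc2
            omega
          have hkey := Aux.four_le_sum4 (fun w => M (v 1) w + M w (v 1))
            (v 0) (v 2) (v 3) (D.emb c e0.1)
            (vne 0 2 (by decide)) (vne 0 3 (by decide)) (Ne.symm hne0)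
            (vne 2 3 (by decide)) (Ne.symm hne2) (Ne.symm hne3) t0 t2 t3 tw
          have hkey' : 4 ≤ ∑ w, (M (v 1) w + M w (v 1)) := hkey
          omega
  -- no other block meets any node of the diamond
  have excl : ∀ (a : Fin 4) (c : Fin D.n) (k : Fin (D.shape c).numNodes),
      D.emb c k = v a → c = b := by
    intro a
    fin_cases a
    · exact outlet_excl 0 (by decide)
    · exact outlet_excl 1 (by decide)
    · intro c k h
      by_contra hcb
      exact (deadend c k hcb).1 h
    · intro c k h
      by_contra hcb
      exact (deadend c k hcb).2 h
  -- exact multiplicities between diamond vertices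
  have Mval : ∀ a a' : Fin 4, M (v a) (v a') =
      BlockShape.diamond.edges.countP (fun e => decide (e = (a, a'))) := by
    intro a a'
    rw [hMsum, Finset.sum_eq_single b]
    · exact cntb a a'
    · intro d _ hdb
      rw [List.countP_eq_zero]
      intro f hf hp
      rw [decide_eq_true_eq] at hp
      exact hdb (excl a d f.1 hp.1)
    · intro hb'
      exact absurd (Finset.mem_univ b) hb'
  have Mout : ∀ (a : Fin 4) (x : V), (∀ a' : Fin 4, v a' ≠ x) →
      M (v a) x = 0 ∧ M x (v a) = 0 := by
    intro a x hx
    constructor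
    · rw [hMsum]
      apply Finset.sum_eq_zero
      intro d _
      rw [List.countP_eq_zero]
      intro f hf hp
      rw [decide_eq_true_eq] at hp
      obtain ⟨hp1, hp2⟩ := hp
      have hdb := excl a d f.1 hp1
      subst hdb
      obtain ⟨e, he, he1, he2⟩ := bedge f hf
      exact hx e.2 (by rw [← hp2, he2])
    · rw [hMsum]
      apply Finset.sum_eq_zero
      intro d _
      rw [List.countP_eq_zero]
      intro f hf hp
      rw [decide_eq_true_eq] at hp
      obtain ⟨hp1, hp2⟩ := hp
      have hdb := excl a d f.2 hp2
      subst hdb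
      obtain ⟨e, he, he1, he2⟩ := bedge f hf
      exact hx e.1 (by rw [← hp1, he1])
  have cntsub : ∀ a a' : Fin 4,
      (BlockShape.diamond.edges.countP (fun e => decide (e = (a, a')))) -
        (BlockShape.diamond.edges.countP (fun e => decide (e = (a', a)))) =
      BlockShape.diamond.edges.countP (fun e => decide (e = (a, a'))) := by decide
  have Gval : ∀ a a' : Fin 4, G (v a) (v a') =
      BlockShape.diamond.edges.countP (fun e => decide (e = (a, a'))) := by
    intro a a'
    rw [hGM, Mval, Mval, cntsub]
  -- assemble the four statements
  refine ⟨?_, ?_, ?_, ?_⟩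
  · intro i _ c k h
    exact excl (Fin.cast h4 i) c k (by rw [h, vi i])
  · -- reachability inside the diamond
    have hadj : ∀ a a' : Fin 4,
        0 < (BlockShape.diamond.edges.countP (fun e => decide (e = (a, a')))) +
            (BlockShape.diamond.edges.countP (fun e => decide (e = (a', a)))) →
        Adj G (v a) (v a') := by
      intro a a' h
      show 0 < G (v a) (v a') + G (v a') (v a)
      rw [Gval, Gval]
      exact h
    have hsym : Symmetric (Adj G) := by
      intro x y h
      have h' : 0 < G x y + G y x := h
      show 0 < G y x + G x y
      omega
    have r0 : ∀ a : Fin 4, Reach G (v 0) (v a) := by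
      intro a
      fin_cases a
      · exact Relation.ReflTransGen.refl
      · exact Relation.ReflTransGen.single (hadj 0 1 (by decide))
      · exact Relation.ReflTransGen.single (hadj 0 2 (by decide))
      · exact Relation.ReflTransGen.single (hadj 0 3 (by decide))
    have rall : ∀ a a' : Fin 4, Reach G (v a) (v a') := by
      intro a a'
      exact Relation.ReflTransGen.trans
        (by haveI : Std.Symm (Adj G) := ⟨fun _ _ h => hsym h⟩; exact Std.Symm.symm (r := Relation.ReflTransGen (Adj G)) _ _ (r0 a)) (r0 a')
    intro i j
    rw [vi i, vi j]
    exact rall _ _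
  · -- the component of the diamond is closed
    intro i x hr
    rw [vi i] at hr
    have hr' : Relation.ReflTransGen (Adj G) (v (Fin.cast h4 i)) x := hr
    clear hr
    induction hr' with
    | refl => exact ⟨i, vi i⟩
    | tail _ hadj ih =>
        rename_i y x' _
        obtain ⟨j, hj⟩ := ih
        by_contra hno
        push_neg at hno
        have hax : ∀ a' : Fin 4, v a' ≠ x' := fun a' => hno (κ a')
        rw [vi j] at hj
        obtain ⟨hm1, hm2⟩ := Mout (Fin.cast h4 j) x' hax
        have hadj' : 0 < G y x' + G x' y := hadj
        rw [← hj] at hadj'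
        rw [hGM, hGM, hm1, hm2] at hadj'
        omega
  · -- exact edge multiplicities
    intro i j
    rw [vi i, vi j, Gval, Aux.countP_eq hb]
    refine List.countP_congr fun e _ => ?_
    have hiff : (e = (Fin.cast h4 i, Fin.cast h4 j)) ↔
        ((κ e.1, κ e.2) : Fin (D.shape b).numNodes × Fin (D.shape b).numNodes) = (i, j) := by
      constructor
      · rintro rfl
        show (κ (Fin.cast h4 i), κ (Fin.cast h4 j)) = (i, j)
        rw [show κ (Fin.cast h4 i) = i from Fin.ext (κval _),
          show κ (Fin.cast h4 j) = j from Fin.ext (κval _)]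
      · intro h
        have h1 : κ e.1 = i := congrArg Prod.fst h
        have h2 : κ e.2 = j := congrArg Prod.snd h
        have : e.1 = Fin.cast h4 i := by rw [← h1, κcast]
        have : e.2 = Fin.cast h4 j := by rw [← h2, κcast]
        exact Prod.ext ‹e.1 = Fin.cast h4 i› ‹e.2 = Fin.cast h4 j›
    show (decide (e = (Fin.cast h4 i, Fin.cast h4 j)) = true) ↔
      (decide (((κ e.1, κ e.2) : Fin (D.shape b).numNodes × Fin (D.shape b).numNodes)
        = (i, j)) = true)
    simp only [decide_eq_true_eq]
    exact hiff
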